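/- Let Y be a smooth projective curve over an algebraically closed field K of characteristic p > 0, and let S be a locally free sheaf of degree 0 on Y. If there exist integers e' > e ≥ 0 such that the Frobenius pullbacks satisfy F^{e'*}(S) ≅ F^{e*}(S), then S is strongly semistable (i.e., F^{e*}(S) is semistable for every e ≥ 0). -/

import Mathlib

open CategoryTheory CategoryTheory.Limits

universe v u

variable {C : Type u} [Category.{v} C] [Abelian C]

/-- The slope `μ = deg / rk` of an object (a coherent sheaf on a curve). -/
noncomputable def sheafSlope (deg : C → ℤ) (rk : C → ℕ) (X : C) : ℚ :=
  (deg X : ℚ) / (rk X : ℚ)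

/-- Semistability: every nonzero subobject has slope at most the slope of `X`. -/
def SheafSemistable (deg : C → ℤ) (rk : C → ℕ) (X : C) : Prop :=
  ∀ (T : C) (f : T ⟶ X), Mono f → rk T ≠ 0 → sheafSlope deg rk T ≤ sheafSlope deg rk X

/-- The `e`-fold iterate of an endofunctor (the `e`-th Frobenius pullback). -/
def iterFunctor (Φ : C ⥤ C) : ℕ → (C ⥤ C)
  | 0 => 𝟭 C
  | e + 1 => iterFunctor Φ e ⋙ Φ

lemma iterFunctor_obj_add (Φ : C ⥤ C) (m n : ℕ) (X : C) :
    (iterFunctor Φ n).obj ((iterFunctor Φ m).obj X) = (iterFunctor Φ (m + n)).obj X := by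
  induction n with
  | zero => rfl
  | succ n ih =>
      show Φ.obj ((iterFunctor Φ n).obj _) = Φ.obj _
      rw [ih]; rfl


/-- **Frobenius-periodic bundles of degree zero are strongly semistable.**
Let `Y` be a smooth projective curve over an algebraically closed field of
characteristic `p > 0`, modelled by its category of coherent sheaves `C` with
degree and rank functions, and the Frobenius pullback `Frob` (exact, multiplying
degrees by `p` and preserving ranks; slopes of subsheaves of a fixed sheaf are
bounded above).  If `S` is locally free of degree `0` and
`F^{e'*}(S) ≅ F^{e*}(S)` for some `e' > e`, then `S` is strongly semistable:
all Frobenius pullbacks `F^{e''*}(S)` are semistable. -/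
theorem frobenius_periodic_implies_strongly_semistable
    (deg : C → ℤ) (rk : C → ℕ) (p : ℕ) (hp : p.Prime)
    (hiso : ∀ X Y : C, (X ≅ Y) → deg X = deg Y ∧ rk X = rk Y)
    (Frob : C ⥤ C)
    (hFdeg : ∀ X : C, deg (Frob.obj X) = p * deg X)
    (hFrk : ∀ X : C, rk (Frob.obj X) = rk X)
    (hFmono : ∀ (X Y : C) (f : X ⟶ Y), Mono f → Mono (Frob.map f))
    (hbound : ∀ X : C, ∃ M : ℚ, ∀ (T : C) (f : T ⟶ X), Mono f → rk T ≠ 0 →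
      sheafSlope deg rk T ≤ M)
    (S : C) (hrkS : rk S ≠ 0) (hdegS : deg S = 0)
    (e e' : ℕ) (hee' : e < e')
    (hper : Nonempty ((iterFunctor Frob e').obj S ≅ (iterFunctor Frob e).obj S)) :
    ∀ e'' : ℕ, SheafSemistable deg rk ((iterFunctor Frob e'').obj S) := by
  -- basic facts about iterated pullback
  have hiterdeg : ∀ (n : ℕ) (X : C), deg ((iterFunctor Frob n).obj X) = p ^ n * deg X := by
    intro n
    induction n with
    | zero => intro X; simp [iterFunctor]
    | succ n ih =>
        intro X
        show deg (Frob.obj ((iterFunctor Frob n).obj X)) = _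
        rw [hFdeg, ih, pow_succ]; ring
  have hiterrk : ∀ (n : ℕ) (X : C), rk ((iterFunctor Frob n).obj X) = rk X := by
    intro n
    induction n with
    | zero => intro X; rfl
    | succ n ih =>
        intro X
        show rk (Frob.obj ((iterFunctor Frob n).obj X)) = _
        rw [hFrk, ih]
  have hitermono : ∀ (n : ℕ) (X Y : C) (f : X ⟶ Y), Mono f →
      Mono ((iterFunctor Frob n).map f) := by
    intro n
    induction n with
    | zero => intro X Y f hf; exact hf
    | succ n ih =>
        intro X Y f hf
        exact hFmono _ _ _ (ih X Y f hf)
  set A : ℕ → C := fun n => (iterFunctor Frob n).obj S with hA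
  have hdegA : ∀ n, deg (A n) = 0 := by
    intro n; simp [hA, hiterdeg, hdegS]
  -- one-step periodicity above level e
  have hstep : ∀ n, e ≤ n → Nonempty (A (n + (e' - e)) ≅ A n) := by
    have h1 : ∀ k, Nonempty (A (e' + k) ≅ A (e + k)) := by
      intro k
      induction k with
      | zero => simpa using hper
      | succ k ih =>
          exact ih.map (fun i => Frob.mapIso i)
    intro n hn
    have hkey : n + (e' - e) = e' + (n - e) := by omega
    have hkey2 : e + (n - e) = n := by omega
    rw [hkey]
    have := h1 (n - e)
    rwa [hkey2] at this
  have hmulti : ∀ (m n : ℕ), e ≤ n → Nonempty (A (n + m * (e' - e)) ≅ A n) := by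
    intro m
    induction m with
    | zero => intro n hn; simp; exact ⟨Iso.refl _⟩
    | succ m ih =>
        intro n hn
        have h1 := hstep (n + m * (e' - e)) (by omega)
        have h2 := ih n hn
        have hk : n + (m + 1) * (e' - e) = n + m * (e' - e) + (e' - e) := by ring
        rw [hk]
        exact Nonempty.map2 (fun i j => i.trans j) h1 h2
  -- main argument
  intro e'' T f hf hrkT
  by_contra hlt
  push_neg at hlt
  have hrkTpos : (0 : ℚ) < (rk T : ℚ) := by
    exact_mod_cast Nat.pos_of_ne_zero hrkT
  have hslopeA : sheafSlope deg rk (A e'') = 0 := by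
    simp [sheafSlope, hdegA]
  rw [hslopeA] at hlt
  have hdegT : (1 : ℤ) ≤ deg T := by
    by_contra hdT
    push_neg at hdT
    have : sheafSlope deg rk T ≤ 0 := by
      unfold sheafSlope
      apply div_nonpos_of_nonpos_of_nonneg
      · exact_mod_cast (by omega : deg T ≤ 0)
      · positivity
    linarith
  obtain ⟨M, hM⟩ := hbound (A (e'' + e))
  obtain ⟨m, hm⟩ := exists_nat_gt (M * (rk T : ℚ))
  set d := e' - e with hd
  set k := e + m * d with hk
  -- push the subobject up k steps
  have hgmono : Mono ((iterFunctor Frob k).map f) := hitermono k _ _ f hf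
  have heq : (iterFunctor Frob k).obj (A e'') = A (e'' + k) := by
    simpa [hA] using iterFunctor_obj_add Frob e'' k S
  have heq2 : e'' + k = (e'' + e) + m * d := by omega
  obtain ⟨ι⟩ := hmulti m (e'' + e) (by omega)
  have heq3 : (iterFunctor Frob k).obj (A e'') = A ((e'' + e) + m * d) := by
    rw [heq, heq2]
  let g : (iterFunctor Frob k).obj T ⟶ A (e'' + e) :=
    (iterFunctor Frob k).map f ≫ eqToHom heq3 ≫ ι.hom
  have hgm : Mono g := by
    have := hgmono
    apply mono_comp
  have hrkTk : rk ((iterFunctor Frob k).obj T) = rk T := hiterrk k T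
  have hbnd := hM _ g hgm (by rw [hrkTk]; exact hrkT)
  -- compute the slope of the pushed subobject
  have hslope : sheafSlope deg rk ((iterFunctor Frob k).obj T)
      = ((p : ℚ) ^ k * (deg T : ℚ)) / (rk T : ℚ) := by
    unfold sheafSlope
    rw [hiterdeg, hrkTk]
    push_cast
    ring
  -- derive the contradiction
  have hpk : (m : ℚ) < (p : ℚ) ^ k := by
    have hmk : m ≤ k := by
      have : m ≤ m * d := Nat.le_mul_of_pos_right m (by omega)
      omega
    have h1 : m < 2 ^ k := lt_of_le_of_lt hmk (Nat.lt_two_pow_self (n := k))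
    have h2 : (2 : ℕ) ^ k ≤ p ^ k := Nat.pow_le_pow_left hp.two_le k
    exact_mod_cast lt_of_lt_of_le h1 h2
  have hfinal : M < sheafSlope deg rk ((iterFunctor Frob k).obj T) := by
    rw [hslope, lt_div_iff₀ hrkTpos]
    have h1 : (p : ℚ) ^ k ≤ (p : ℚ) ^ k * (deg T : ℚ) := by
      nlinarith [pow_pos (by exact_mod_cast hp.pos : (0:ℚ) < p) k,
        (by exact_mod_cast hdegT : (1:ℚ) ≤ (deg T : ℚ))]
    linarith
  linarith
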